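/- Let d, n ≥ 1 and let P = (p₁,…,p_n) ∈ (ℝ^d)^n have pairwise distinct points. Then the set of tuples A = (A₁,…,A_n) ∈ S_{d,+}(ℝ)^n such that r_{i,j}(A) ≠ r_{k,l}(A) for all unordered pairs {i,j} ≠ {k,l} of distinct indices in {1,…,n} is open and dense in S_{d,+}(ℝ)^n. -/

import Mathlib

open Matrix

/-- The Euclidean norm on `ℝ^d` (viewed as `Fin d → ℝ`). -/
noncomputable def euclNorm {d : ℕ} (x : Fin d → ℝ) : ℝ := Real.sqrt (x ⬝ᵥ x)

/-- The "ellipsoidal" distance `r_{i,j}(A)` attached to a point cloud `p` and a tuple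
of matrices `A`:  with `u = (pᵢ - pⱼ)/‖pᵢ - pⱼ‖` and `q_t(x) = ⟨A_t x, x⟩`,
`r_{i,j}(A) = ‖pᵢ - pⱼ‖ / ((1/2)(√(q_i(u)) + √(q_j(-u))))`, with the convention
`r_{i,i}(A) = 0`. -/
noncomputable def rEll {d n : ℕ} (p : Fin n → Fin d → ℝ)
    (A : Fin n → Fin d → Fin d → ℝ) (i j : Fin n) : ℝ :=
  if i = j then 0 else
    euclNorm (p i - p j) /
      ((1 / 2) *
        (Real.sqrt ((Matrix.of (A i)).mulVec ((euclNorm (p i - p j))⁻¹ • (p i - p j)) ⬝ᵥ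
            ((euclNorm (p i - p j))⁻¹ • (p i - p j))) +
         Real.sqrt ((Matrix.of (A j)).mulVec (-((euclNorm (p i - p j))⁻¹ • (p i - p j))) ⬝ᵥ
            (-((euclNorm (p i - p j))⁻¹ • (p i - p j))))))

namespace GenPosAux

variable {d n : ℕ}

lemma self_dot_pos {x : Fin d → ℝ} (hx : x ≠ 0) : 0 < x ⬝ᵥ x := by
  have h0 : 0 ≤ x ⬝ᵥ x := by
    simpa using dotProduct_star_self_nonneg x
  exact lt_of_le_of_ne h0 (fun h => hx (dotProduct_self_eq_zero.mp h.symm))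

lemma euclNorm_pos {x : Fin d → ℝ} (hx : x ≠ 0) : 0 < euclNorm x :=
  Real.sqrt_pos.2 (self_dot_pos hx)

lemma unit_self_dot {x : Fin d → ℝ} (hx : x ≠ 0) :
    ((euclNorm x)⁻¹ • x) ⬝ᵥ ((euclNorm x)⁻¹ • x) = 1 := by
  have hq : 0 < x ⬝ᵥ x := self_dot_pos hx
  rw [smul_dotProduct, dotProduct_smul, smul_eq_mul, smul_eq_mul, ← mul_assoc,
    ← mul_inv, euclNorm, Real.mul_self_sqrt hq.le]
  exact inv_mul_cancel₀ hq.ne'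

lemma unit_vec_ne_zero {x : Fin d → ℝ} (hx : x ≠ 0) : (euclNorm x)⁻¹ • x ≠ 0 :=
  smul_ne_zero (inv_ne_zero (euclNorm_pos hx).ne') hx

lemma quad_pos {B : Fin d → Fin d → ℝ} (hB : (Matrix.of B).PosDef) {v : Fin d → ℝ}
    (hv : v ≠ 0) : 0 < (Matrix.of B).mulVec v ⬝ᵥ v := by
  have := (posDef_iff_dotProduct_mulVec.1 hB).2 hv
  rwa [star_trivial, dotProduct_comm] at this

lemma posSemidef_smul_one {c : ℝ} (hc : 0 ≤ c) :
    (c • (1 : Matrix (Fin d) (Fin d) ℝ)).PosSemidef := by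
  rw [posSemidef_iff_dotProduct_mulVec]
  constructor
  · simp [Matrix.IsHermitian, Matrix.conjTranspose_smul]
  · intro x
    rw [Matrix.smul_mulVec, Matrix.one_mulVec, dotProduct_smul, smul_eq_mul]
    exact mul_nonneg hc (by simpa using dotProduct_star_self_nonneg x)

/-- `rEll` only depends on the matrices at the two indices. -/
lemma rEll_congr (p : Fin n → Fin d → ℝ) {B B' : Fin n → Fin d → Fin d → ℝ} {i j : Fin n}
    (h1 : B i = B' i) (h2 : B j = B' j) : rEll p B i j = rEll p B' i j := by
  unfold rEll; rw [h1, h2]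

lemma cont_quad (v w : Fin d → ℝ) :
    Continuous fun B : Fin d → Fin d → ℝ => (Matrix.of B).mulVec v ⬝ᵥ w := by
  simp only [Matrix.mulVec, dotProduct, Matrix.of_apply]
  exact continuous_finset_sum _ fun a _ =>
    (continuous_finset_sum _ fun b _ =>
      ((continuous_apply b).comp (continuous_apply a)).mul continuous_const).mul continuous_const

variable (p : Fin n → Fin d → ℝ)

/-- continuity of `rEll` in the matrix tuple, on the positive-definite subtype. -/
lemma cont_rEll (hp : ∀ i j : Fin n, i ≠ j → p i ≠ p j) (i j : Fin n) :
    Continuous fun A : Fin n → {B : Fin d → Fin d → ℝ // (Matrix.of B).PosDef} =>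
      rEll p (fun t => (A t).1) i j := by
  rcases eq_or_ne i j with h | h
  · simp only [rEll, if_pos h]; exact continuous_const
  · have hpij : p i ≠ p j := hp i j h
    have hw : p i - p j ≠ 0 := sub_ne_zero.2 hpij
    set v : Fin d → ℝ := (euclNorm (p i - p j))⁻¹ • (p i - p j) with hv
    have hvne : v ≠ 0 := unit_vec_ne_zero hw
    have hvne' : -v ≠ 0 := neg_ne_zero.2 hvne
    simp only [rEll, if_neg h]
    apply Continuous.div continuous_const
    · apply Continuous.mul continuous_const
      apply Continuous.add
      · exact ((cont_quad v v).comp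
          (continuous_subtype_val.comp (continuous_apply i))).sqrt
      · exact ((cont_quad (-v) (-v)).comp
          (continuous_subtype_val.comp (continuous_apply j))).sqrt
    · intro A
      have h1 : 0 < Real.sqrt ((Matrix.of ((A i).1)).mulVec v ⬝ᵥ v) :=
        Real.sqrt_pos.2 (quad_pos (A i).2 hvne)
      have h2 : 0 ≤ Real.sqrt ((Matrix.of ((A j).1)).mulVec (-v) ⬝ᵥ (-v)) := Real.sqrt_nonneg _
      have : (0:ℝ) < (1/2) * (Real.sqrt ((Matrix.of ((A i).1)).mulVec v ⬝ᵥ v)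
          + Real.sqrt ((Matrix.of ((A j).1)).mulVec (-v) ⬝ᵥ (-v))) := by linarith
      exact this.ne'

/-- The perturbed tuple of matrices. -/
noncomputable def matA (A : Fin n → {B : Fin d → Fin d → ℝ // (Matrix.of B).PosDef})
    (t : Fin n → ℝ) : Fin n → Fin d → Fin d → ℝ :=
  fun m => Matrix.of.symm (Matrix.of ((A m).1) + |t m| • (1 : Matrix (Fin d) (Fin d) ℝ))

lemma matA_posdef (A : Fin n → {B : Fin d → Fin d → ℝ // (Matrix.of B).PosDef})
    (t : Fin n → ℝ) (m : Fin n) : (Matrix.of (matA A t m)).PosDef := by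
  have h : Matrix.of (matA A t m) = Matrix.of ((A m).1) + |t m| • 1 := rfl
  rw [h]
  exact (A m).2.add_posSemidef (posSemidef_smul_one (abs_nonneg _))

lemma matA_congr (A : Fin n → {B : Fin d → Fin d → ℝ // (Matrix.of B).PosDef})
    {t u : Fin n → ℝ} {m : Fin n} (h : t m = u m) : matA A t m = matA A u m := by
  unfold matA; rw [h]

/-- shift formula for the quadratic form. -/
lemma quad_matA (A : Fin n → {B : Fin d → Fin d → ℝ // (Matrix.of B).PosDef})
    (t : Fin n → ℝ) (m : Fin n) {w : Fin d → ℝ} (hw : w ⬝ᵥ w = 1) :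
    (Matrix.of (matA A t m)).mulVec w ⬝ᵥ w = (Matrix.of ((A m).1)).mulVec w ⬝ᵥ w + |t m| := by
  have h : Matrix.of (matA A t m) = Matrix.of ((A m).1) + |t m| • 1 := rfl
  rw [h, Matrix.add_mulVec, Matrix.smul_mulVec, Matrix.one_mulVec,
    add_dotProduct, smul_dotProduct, hw, smul_eq_mul, mul_one]

lemma rEll_matA_eq (A : Fin n → {B : Fin d → Fin d → ℝ // (Matrix.of B).PosDef})
    (t : Fin n → ℝ) {i j : Fin n} (hij : i ≠ j) (hpij : p i ≠ p j) :
    rEll p (matA A t) i j = euclNorm (p i - p j) /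
      ((1 / 2) *
        (Real.sqrt ((Matrix.of ((A i).1)).mulVec ((euclNorm (p i - p j))⁻¹ • (p i - p j)) ⬝ᵥ
            ((euclNorm (p i - p j))⁻¹ • (p i - p j)) + |t i|) +
         Real.sqrt ((Matrix.of ((A j).1)).mulVec (-((euclNorm (p i - p j))⁻¹ • (p i - p j))) ⬝ᵥ
            (-((euclNorm (p i - p j))⁻¹ • (p i - p j))) + |t j|))) := by
  have hw : p i - p j ≠ 0 := sub_ne_zero.2 hpij
  have hv1 : ((euclNorm (p i - p j))⁻¹ • (p i - p j)) ⬝ᵥ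
      ((euclNorm (p i - p j))⁻¹ • (p i - p j)) = 1 := unit_self_dot hw
  have hv2 : (-((euclNorm (p i - p j))⁻¹ • (p i - p j))) ⬝ᵥ
      (-((euclNorm (p i - p j))⁻¹ • (p i - p j))) = 1 := by
    rw [neg_dotProduct, dotProduct_neg, neg_neg]; exact hv1
  rw [rEll, if_neg hij, quad_matA A t i hv1, quad_matA A t j hv2]

/-- Strict decrease of `rEll i j` when bumping up coordinate `m ∈ {i,j}`. -/
lemma rEll_update_lt (A : Fin n → {B : Fin d → Fin d → ℝ // (Matrix.of B).PosDef})
    (t : Fin n → ℝ) (ht : ∀ m, 0 < t m) {i j m : Fin n} (hij : i ≠ j) (hpij : p i ≠ p j)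
    (hm : m = i ∨ m = j) {s : ℝ} (hs : 0 < s) :
    rEll p (matA A (Function.update t m (t m + s))) i j < rEll p (matA A t) i j := by
  have hw : p i - p j ≠ 0 := sub_ne_zero.2 hpij
  set v : Fin d → ℝ := (euclNorm (p i - p j))⁻¹ • (p i - p j) with hv
  have hvne : v ≠ 0 := unit_vec_ne_zero hw
  have hvne' : -v ≠ 0 := neg_ne_zero.2 hvne
  set a := (Matrix.of ((A i).1)).mulVec v ⬝ᵥ v with ha'
  set b := (Matrix.of ((A j).1)).mulVec (-v) ⬝ᵥ (-v) with hb'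
  have ha : 0 < a := quad_pos (A i).2 hvne
  have hb : 0 < b := quad_pos (A j).2 hvne'
  have hN : 0 < euclNorm (p i - p j) := euclNorm_pos hw
  rw [rEll_matA_eq p A _ hij hpij, rEll_matA_eq p A t hij hpij]
  rcases hm with hm | hm
  · subst hm
    have hji : j ≠ m := fun h => hij h.symm
    rw [Function.update_self, Function.update_of_ne hji]
    rw [abs_of_pos (ht m), abs_of_pos (ht j), abs_of_pos (by linarith [ht m] : (0:ℝ) < t m + s)]
    have hlt : Real.sqrt (a + t m) < Real.sqrt (a + (t m + s)) :=
      Real.sqrt_lt_sqrt (by linarith [ht m]) (by linarith)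
    have hpos : 0 < (1/2) * (Real.sqrt (a + t m) + Real.sqrt (b + t j)) := by
      have := Real.sqrt_pos.2 (by linarith [ht m] : (0:ℝ) < a + t m)
      have := Real.sqrt_nonneg (b + t j)
      linarith
    exact div_lt_div_of_pos_left hN hpos (by linarith)
  · subst hm
    have him : i ≠ m := hij
    rw [Function.update_self, Function.update_of_ne him]
    rw [abs_of_pos (ht m), abs_of_pos (ht i), abs_of_pos (by linarith [ht m] : (0:ℝ) < t m + s)]
    have hlt : Real.sqrt (b + t m) < Real.sqrt (b + (t m + s)) :=
      Real.sqrt_lt_sqrt (by linarith [ht m]) (by linarith)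
    have hpos : 0 < (1/2) * (Real.sqrt (a + t i) + Real.sqrt (b + t m)) := by
      have := Real.sqrt_pos.2 (by linarith [ht m] : (0:ℝ) < b + t m)
      have := Real.sqrt_nonneg (a + t i)
      linarith
    exact div_lt_div_of_pos_left hN hpos (by linarith)

/-- Perturbation step: inside an open set of strictly positive parameters, we can break one
equality whose left pair contains an index `m` not in the right pair. -/
lemma perturb (A : Fin n → {B : Fin d → Fin d → ℝ // (Matrix.of B).PosDef})
    {V : Set (Fin n → ℝ)} (hV : IsOpen V) {t : Fin n → ℝ} (htV : t ∈ V)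
    (hpos : ∀ u ∈ V, ∀ m, 0 < u m) {i j k l m : Fin n} (hij : i ≠ j) (hpij : p i ≠ p j)
    (hm1 : m = i ∨ m = j) (hm2 : m ≠ k) (hm3 : m ≠ l) :
    ∃ t' ∈ V, rEll p (matA A t') i j ≠ rEll p (matA A t') k l := by
  by_cases heq : rEll p (matA A t) i j = rEll p (matA A t) k l
  · -- bump coordinate m
    have hcont : Continuous fun s : ℝ => Function.update t m (t m + s) := by
      apply continuous_pi
      intro m'
      simp only [Function.update_apply]
      split
      · exact continuous_const.add continuous_id
      · exact continuous_const
    have h0 : Function.update t m (t m + 0) = t := by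
      rw [add_zero]; exact Function.update_eq_self m t
    have hpre : IsOpen ((fun s : ℝ => Function.update t m (t m + s)) ⁻¹' V) :=
      hV.preimage hcont
    have h0mem : (0:ℝ) ∈ (fun s : ℝ => Function.update t m (t m + s)) ⁻¹' V := by
      simp only [Set.mem_preimage, h0]; exact htV
    obtain ⟨ε, hε, hball⟩ := Metric.isOpen_iff.1 hpre 0 h0mem
    set s : ℝ := ε / 2 with hsdef
    have hs : 0 < s := by positivity
    have hsb : s ∈ Metric.ball (0:ℝ) ε := by
      simp only [Metric.mem_ball, Real.dist_eq, sub_zero, abs_of_pos hs]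
      linarith
    set t' := Function.update t m (t m + s) with ht'
    have ht'V : t' ∈ V := hball hsb
    refine ⟨t', ht'V, ?_⟩
    have hkl_eq : rEll p (matA A t') k l = rEll p (matA A t) k l := by
      apply rEll_congr
      · exact matA_congr A (Function.update_of_ne (fun h => hm2 h.symm) _ _)
      · exact matA_congr A (Function.update_of_ne (fun h => hm3 h.symm) _ _)
    have hlt : rEll p (matA A t') i j < rEll p (matA A t) i j :=
      rEll_update_lt p A t (hpos t htV) hij hpij hm1 hs
    rw [hkl_eq, ← heq]
    exact ne_of_lt hlt
  · exact ⟨t, htV, heq⟩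

lemma exists_m {i j k l : Fin n} (hne : ({i, j} : Finset (Fin n)) ≠ {k, l}) :
    (∃ m : Fin n, (m = i ∨ m = j) ∧ m ≠ k ∧ m ≠ l) ∨
    (∃ m : Fin n, (m = k ∨ m = l) ∧ m ≠ i ∧ m ≠ j) := by
  by_contra h
  push_neg at h
  obtain ⟨h1, h2⟩ := h
  apply hne
  ext x
  simp only [Finset.mem_insert, Finset.mem_singleton]
  constructor
  · intro hx
    have := h1 x
    tauto
  · intro hx
    have := h2 x
    tauto

/-- Core existence: we can choose a parameter in any suitable open set avoiding all the
finitely many "bad" equalities. -/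
lemma core (hp : ∀ i j : Fin n, i ≠ j → p i ≠ p j)
    (A : Fin n → {B : Fin d → Fin d → ℝ // (Matrix.of B).PosDef})
    (C : Finset (Fin n × Fin n × Fin n × Fin n)) :
    ∀ V : Set (Fin n → ℝ), IsOpen V → V.Nonempty → (∀ u ∈ V, ∀ m, 0 < u m) →
    ∃ t ∈ V, ∀ c ∈ C, c.1 ≠ c.2.1 → c.2.2.1 ≠ c.2.2.2 →
      ({c.1, c.2.1} : Finset (Fin n)) ≠ {c.2.2.1, c.2.2.2} →
      rEll p (matA A t) c.1 c.2.1 ≠ rEll p (matA A t) c.2.2.1 c.2.2.2 := by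
  induction C using Finset.induction_on with
  | empty =>
    intro V _ hVne _
    obtain ⟨t, ht⟩ := hVne
    exact ⟨t, ht, by simp⟩
  | @insert c C hc IH =>
    obtain ⟨i, j, k, l⟩ := c
    intro V hVopen hVne hVpos
    by_cases hval : i ≠ j ∧ k ≠ l ∧ ({i, j} : Finset (Fin n)) ≠ {k, l}
    · obtain ⟨hij, hkl, hfs⟩ := hval
      have hcontt : ∀ (i' j' : Fin n), Continuous fun t : Fin n → ℝ =>
          rEll p (matA A t) i' j' := by
        intro i' j'
        have : (fun t : Fin n → ℝ => rEll p (matA A t) i' j')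
            = (fun B : Fin n → {B : Fin d → Fin d → ℝ // (Matrix.of B).PosDef} =>
                rEll p (fun m => (B m).1) i' j') ∘
              (fun t m => (⟨matA A t m, matA_posdef A t m⟩ :
                {B : Fin d → Fin d → ℝ // (Matrix.of B).PosDef})) := rfl
        rw [this]
        apply (cont_rEll p hp i' j').comp
        apply continuous_pi
        intro m
        apply Continuous.subtype_mk
        apply continuous_pi; intro a; apply continuous_pi; intro b
        show Continuous fun t : Fin n → ℝ =>
          (A m).1 a b + |t m| * (1 : Matrix (Fin d) (Fin d) ℝ) a b
        exact continuous_const.add (((continuous_apply m).abs).mul continuous_const)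
      obtain ⟨t0, ht0V, ht0⟩ : ∃ t0 ∈ V,
          rEll p (matA A t0) i j ≠ rEll p (matA A t0) k l := by
        obtain ⟨t, htV⟩ := hVne
        rcases exists_m hfs with ⟨m, hm1, hm2, hm3⟩ | ⟨m, hm1, hm2, hm3⟩
        · exact perturb p A hVopen htV hVpos hij (hp i j hij) hm1 hm2 hm3
        · obtain ⟨t', ht'V, hne'⟩ :=
            perturb p A hVopen htV hVpos hkl (hp k l hkl) hm1 hm2 hm3
          exact ⟨t', ht'V, hne'.symm⟩
      set V' := V ∩ {t | rEll p (matA A t) i j ≠ rEll p (matA A t) k l} with hV'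
      have hV'open : IsOpen V' := hVopen.inter (isOpen_ne_fun (hcontt i j) (hcontt k l))
      have hV'ne : V'.Nonempty := ⟨t0, ht0V, ht0⟩
      have hV'pos : ∀ u ∈ V', ∀ m, 0 < u m := fun u hu => hVpos u hu.1
      obtain ⟨t, htV', htgood⟩ := IH V' hV'open hV'ne hV'pos
      refine ⟨t, htV'.1, ?_⟩
      intro c' hc'
      rcases Finset.mem_insert.1 hc' with h | h
      · subst h
        intro _ _ _
        exact htV'.2
      · exact htgood c' h
    · obtain ⟨t, htV, htgood⟩ := IH V hVopen hVne hVpos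
      refine ⟨t, htV, ?_⟩
      intro c' hc'
      rcases Finset.mem_insert.1 hc' with h | h
      · subst h
        intro h1 h2 h3
        exact absurd ⟨h1, h2, h3⟩ hval
      · exact htgood c' h

end GenPosAux

open GenPosAux in
/-- Let `d, n ≥ 1` and let `P = (p₁,…,p_n)` have pairwise distinct
points.  Then the set of tuples `A = (A₁,…,A_n)` of symmetric positive-definite `d×d`
matrices such that `r_{i,j}(A) ≠ r_{k,l}(A)` for all distinct unordered pairs
`{i,j} ≠ {k,l}` of distinct indices is open and dense in `S_{d,+}(ℝ)^n`. -/
theorem genPosEllipsoid_isOpen_and_dense (d n : ℕ) (hd : 1 ≤ d) (hn : 1 ≤ n)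
    (p : Fin n → Fin d → ℝ) (hp : ∀ i j : Fin n, i ≠ j → p i ≠ p j) :
    IsOpen {A : Fin n → {B : Fin d → Fin d → ℝ // (Matrix.of B).PosDef} |
      ∀ i j k l : Fin n, i ≠ j → k ≠ l →
        ({i, j} : Finset (Fin n)) ≠ ({k, l} : Finset (Fin n)) →
        rEll p (fun t => (A t).1) i j ≠ rEll p (fun t => (A t).1) k l} ∧
    Dense {A : Fin n → {B : Fin d → Fin d → ℝ // (Matrix.of B).PosDef} |
      ∀ i j k l : Fin n, i ≠ j → k ≠ l →
        ({i, j} : Finset (Fin n)) ≠ ({k, l} : Finset (Fin n)) →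
        rEll p (fun t => (A t).1) i j ≠ rEll p (fun t => (A t).1) k l} := by
  set S := {A : Fin n → {B : Fin d → Fin d → ℝ // (Matrix.of B).PosDef} |
      ∀ i j k l : Fin n, i ≠ j → k ≠ l →
        ({i, j} : Finset (Fin n)) ≠ ({k, l} : Finset (Fin n)) →
        rEll p (fun t => (A t).1) i j ≠ rEll p (fun t => (A t).1) k l} with hS
  constructor
  · -- openness
    have hrw : S = ⋂ i, ⋂ j, ⋂ k, ⋂ l,
        {A : Fin n → {B : Fin d → Fin d → ℝ // (Matrix.of B).PosDef} |
          i ≠ j → k ≠ l → ({i, j} : Finset (Fin n)) ≠ ({k, l} : Finset (Fin n)) →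
          rEll p (fun t => (A t).1) i j ≠ rEll p (fun t => (A t).1) k l} := by
      ext A
      simp only [hS, Set.mem_setOf_eq, Set.mem_iInter]
    rw [hrw]
    apply isOpen_iInter_of_finite; intro i
    apply isOpen_iInter_of_finite; intro j
    apply isOpen_iInter_of_finite; intro k
    apply isOpen_iInter_of_finite; intro l
    by_cases h1 : i ≠ j
    · by_cases h2 : k ≠ l
      · by_cases h3 : ({i, j} : Finset (Fin n)) ≠ ({k, l} : Finset (Fin n))
        · have : {A : Fin n → {B : Fin d → Fin d → ℝ // (Matrix.of B).PosDef} |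
              i ≠ j → k ≠ l → ({i, j} : Finset (Fin n)) ≠ ({k, l} : Finset (Fin n)) →
              rEll p (fun t => (A t).1) i j ≠ rEll p (fun t => (A t).1) k l}
              = {A | rEll p (fun t => (A t).1) i j ≠ rEll p (fun t => (A t).1) k l} := by
            ext A; simp [h1, h2, h3]
          rw [this]
          exact isOpen_ne_fun (cont_rEll p hp i j) (cont_rEll p hp k l)
        · push_neg at h3
          have : {A : Fin n → {B : Fin d → Fin d → ℝ // (Matrix.of B).PosDef} |
              i ≠ j → k ≠ l → ({i, j} : Finset (Fin n)) ≠ ({k, l} : Finset (Fin n)) →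
              rEll p (fun t => (A t).1) i j ≠ rEll p (fun t => (A t).1) k l} = Set.univ := by
            ext A; simp [h3]
          rw [this]; exact isOpen_univ
      · push_neg at h2
        have : {A : Fin n → {B : Fin d → Fin d → ℝ // (Matrix.of B).PosDef} |
            i ≠ j → k ≠ l → ({i, j} : Finset (Fin n)) ≠ ({k, l} : Finset (Fin n)) →
            rEll p (fun t => (A t).1) i j ≠ rEll p (fun t => (A t).1) k l} = Set.univ := by
          ext A; simp [h2]
        rw [this]; exact isOpen_univ
    · push_neg at h1
      have : {A : Fin n → {B : Fin d → Fin d → ℝ // (Matrix.of B).PosDef} |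
          i ≠ j → k ≠ l → ({i, j} : Finset (Fin n)) ≠ ({k, l} : Finset (Fin n)) →
          rEll p (fun t => (A t).1) i j ≠ rEll p (fun t => (A t).1) k l} = Set.univ := by
        ext A; simp [h1]
      rw [this]; exact isOpen_univ
  · -- density
    rw [dense_iff_inter_open]
    intro U hU hUne
    obtain ⟨A, hA⟩ := hUne
    -- the perturbation map
    set Φ : (Fin n → ℝ) → (Fin n → {B : Fin d → Fin d → ℝ // (Matrix.of B).PosDef}) :=
      fun t m => ⟨matA A t m, matA_posdef A t m⟩ with hΦ
    have hΦcont : Continuous Φ := by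
      apply continuous_pi; intro m
      apply Continuous.subtype_mk
      apply continuous_pi; intro a; apply continuous_pi; intro b
      show Continuous fun t : Fin n → ℝ =>
        (A m).1 a b + |t m| * (1 : Matrix (Fin d) (Fin d) ℝ) a b
      exact continuous_const.add (((continuous_apply m).abs).mul continuous_const)
    have hΦ0 : Φ 0 = A := by
      funext m
      apply Subtype.ext
      show matA A 0 m = (A m).1
      funext a b
      show (A m).1 a b + |(0:ℝ)| * (1 : Matrix (Fin d) (Fin d) ℝ) a b = (A m).1 a b
      simp
    set W : Set (Fin n → ℝ) := Φ ⁻¹' U with hW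
    have hWopen : IsOpen W := hU.preimage hΦcont
    have hW0 : (0 : Fin n → ℝ) ∈ W := by
      simp only [hW, Set.mem_preimage, hΦ0]; exact hA
    -- the set of positive parameters
    set Ω : Set (Fin n → ℝ) := {t | ∀ m, 0 < t m} with hΩ
    have hΩopen : IsOpen Ω := by
      have : Ω = ⋂ m, (fun t : Fin n → ℝ => t m) ⁻¹' Set.Ioi 0 := by
        ext t; simp [hΩ]
      rw [this]
      exact isOpen_iInter_of_finite fun m => isOpen_Ioi.preimage (continuous_apply m)
    -- find a point of W ∩ Ω
    have hconst : Continuous fun s : ℝ => (fun _ : Fin n => s) :=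
      continuous_pi fun _ => continuous_id
    have hpre : IsOpen ((fun s : ℝ => (fun _ : Fin n => s)) ⁻¹' W) := hWopen.preimage hconst
    have h0pre : (0:ℝ) ∈ (fun s : ℝ => (fun _ : Fin n => s)) ⁻¹' W := by
      exact hW0
    obtain ⟨ε, hε, hball⟩ := Metric.isOpen_iff.1 hpre 0 h0pre
    have hsεb : (ε/2) ∈ Metric.ball (0:ℝ) ε := by
      simp only [Metric.mem_ball, Real.dist_eq, sub_zero, abs_of_pos (by positivity : (0:ℝ) < ε/2)]
      linarith
    have ht0W : (fun _ : Fin n => ε/2) ∈ W := hball hsεb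
    have ht0Ω : (fun _ : Fin n => ε/2) ∈ Ω := fun m => by positivity
    -- apply the core lemma
    obtain ⟨t, htV, htgood⟩ := core p hp A Finset.univ (W ∩ Ω) (hWopen.inter hΩopen)
      ⟨_, ht0W, ht0Ω⟩ (fun u hu m => hu.2 m)
    refine ⟨Φ t, htV.1, ?_⟩
    intro i j k l hij hkl hfs
    have : (fun m => ((Φ t) m).1) = matA A t := rfl
    rw [this]
    exact htgood (i, j, k, l) (Finset.mem_univ _) hij hkl hfs
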